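/- Suppose the intersection matrix (E_i · E_j) of the exceptional curves E_1, ..., E_m of a birational morphism of smooth projective surfaces is negative definite. If G = ∑ g_i E_i satisfies G · E_j ≥ 0 for all j, then g_i ≤ 0 for all i. -/

import Mathlib

open Matrix in
/-- Linear-algebraic Negativity Lemma: if the symmetric real matrix `M` is
negative definite with nonnegative off-diagonal entries and `g` satisfies
`(M·g)_j ≥ 0` for all `j`, then `g ≤ 0` componentwise. -/
theorem stmt19 (m : ℕ) (M : Matrix (Fin m) (Fin m) ℝ)
    (hsymm : M.IsSymm) (hnegdef : (-M).PosDef)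
    (hoff : ∀ i j, i ≠ j → 0 ≤ M i j)
    (g : Fin m → ℝ) (h : ∀ j, 0 ≤ M.mulVec g j) :
    ∀ i, g i ≤ 0 := by
  set p : Fin m → ℝ := fun i => max (g i) 0 with hp
  set n : Fin m → ℝ := fun i => max (-g i) 0 with hn
  have hpnn : ∀ i, 0 ≤ p i := fun i => le_max_right _ _
  have hnnn : ∀ i, 0 ≤ n i := fun i => le_max_right _ _
  have hg : ∀ i, g i = p i - n i := by
    intro i
    simp only [hp, hn]
    rcases le_total (g i) 0 with h1 | h1
    · rw [max_eq_right h1, max_eq_left (by linarith)]; ring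
    · rw [max_eq_left h1, max_eq_right (by linarith)]; ring
  have hpn : ∀ i, p i * n i = 0 := by
    intro i
    simp only [hp, hn]
    rcases le_total (g i) 0 with h1 | h1
    · rw [max_eq_right h1]; ring
    · rw [max_eq_right (by linarith : -g i ≤ 0)]; ring
  have h1 : 0 ≤ p ⬝ᵥ M.mulVec g := by
    apply Finset.sum_nonneg
    intro i _
    exact mul_nonneg (hpnn i) (h i)
  have h2 : 0 ≤ p ⬝ᵥ M.mulVec n := by
    simp only [dotProduct, Matrix.mulVec, Finset.mul_sum]
    apply Finset.sum_nonneg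
    intro i _
    apply Finset.sum_nonneg
    intro j _
    rcases eq_or_ne i j with rfl | hij
    · have h0 : p i * (M i i * n i) = 0 := by linear_combination (M i i) * hpn i
      rw [h0]
    · exact mul_nonneg (hpnn i) (mul_nonneg (hoff i j hij) (hnnn j))
  have hkey : 0 ≤ p ⬝ᵥ M.mulVec p := by
    have heq : (p : Fin m → ℝ) ⬝ᵥ M.mulVec p
        = p ⬝ᵥ M.mulVec g + p ⬝ᵥ M.mulVec n := by
      have hgeq : (fun i => p i - n i) = g := by funext i; rw [hg i]
      rw [← hgeq]
      have hsub : (fun i => p i - n i) = p - n := rfl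
      rw [hsub, Matrix.mulVec_sub, dotProduct_sub]
      ring
    rw [heq]; linarith
  have hp0 : p = 0 := by
    by_contra hne
    have h3 := hnegdef.dotProduct_mulVec_pos hne
    rw [Matrix.neg_mulVec] at h3
    simp only [dotProduct_neg, star_trivial] at h3
    linarith
  intro i
  have hi := congrFun hp0 i
  simp only [hp, Pi.zero_apply] at hi
  rcases le_total (g i) 0 with h1 | h1
  · exact h1
  · rw [max_eq_left h1] at hi; linarith
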